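/- Let A → B be a ring extension with A ⊆ B. Then the seminormalization A⁺_B of A in B is contained in the saturation Â_B of A in B. -/

import Mathlib

open TensorProduct

/-- The saturation of `A` in `B`: elements `b` of `B` such that `b ⊗ 1 - 1 ⊗ b` is
nilpotent in `B ⊗[A] B`. -/
def saturation (A : Type*) {B : Type*} [CommRing A] [CommRing B] [Algebra A B] : Set B :=
  {b | IsNilpotent (b ⊗ₜ[A] (1 : B) - (1 : B) ⊗ₜ[A] b)}

/-- The induced map on residue fields `k(p ∩ A) → k(p)` associated to a ring
homomorphism `f : A →+* B` and a prime `p` of `B`. -/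
noncomputable def residueFieldMap {A B : Type*} [CommRing A] [CommRing B] (f : A →+* B)
    (p : Ideal B) [p.IsPrime] :
    IsLocalRing.ResidueField (Localization.AtPrime (p.comap f)) →+*
      IsLocalRing.ResidueField (Localization.AtPrime p) :=
  haveI := Localization.isLocalHom_localRingHom (p.comap f) p f rfl
  IsLocalRing.ResidueField.map (Localization.localRingHom (p.comap f) p f rfl)

/-- A ring homomorphism `f : A →+* B` is equiresidual if for every prime `p` of `B`
the induced residue field extension `k(p ∩ A) → k(p)` is an isomorphism. -/
def Equiresidual {A B : Type*} [CommRing A] [CommRing B] (f : A →+* B) : Prop :=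
  ∀ (p : Ideal B) (hp : p.IsPrime),
    Function.Bijective (@residueFieldMap _ _ _ _ f p hp)

/-- The extension `A → B` is subintegral: integral, bijective on prime spectra,
and equiresidual. -/
def IsSubintegralExt (A B : Type*) [CommRing A] [CommRing B] [Algebra A B] : Prop :=
  Algebra.IsIntegral A B ∧
    Function.Bijective (PrimeSpectrum.comap (algebraMap A B)) ∧
    Equiresidual (algebraMap A B)

/-- `S` is the seminormalization of `A` in `B` : `A → S` is subintegral and `S` is
the greatest intermediate ring which is subintegral over `A`. -/
def IsSeminormalization {A B : Type*} [CommRing A] [CommRing B] [Algebra A B]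
    (S : Subalgebra A B) : Prop :=
  IsSubintegralExt A S ∧ ∀ C : Subalgebra A B, IsSubintegralExt A C → C ≤ S

/-- Key lemma: if `f : A → S` is injective on prime spectra and equiresidual, then any
two homomorphisms from `S` to a field which agree on `A` are equal (radiciality). -/
lemma radicial_key {A S K : Type*} [CommRing A] [CommRing S] [Field K]
    (f : A →+* S)
    (hspec : Function.Injective (PrimeSpectrum.comap f))
    (hres : Equiresidual f)
    (φ₁ φ₂ : S →+* K) (hcomm : φ₁.comp f = φ₂.comp f) :
    φ₁ = φ₂ := by
  have hp1 : (RingHom.ker φ₁).IsPrime := RingHom.ker_isPrime φ₁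
  have hp2 : (RingHom.ker φ₂).IsPrime := RingHom.ker_isPrime φ₂
  -- the two kernels agree
  have hpeq : RingHom.ker φ₁ = RingHom.ker φ₂ := by
    have h0 : (RingHom.ker φ₁).comap f = (RingHom.ker φ₂).comap f := by
      rw [RingHom.comap_ker φ₁ f, RingHom.comap_ker φ₂ f, hcomm]
    have := hspec (a₁ := ⟨RingHom.ker φ₁, hp1⟩) (a₂ := ⟨RingHom.ker φ₂, hp2⟩)
      (by ext1; exact h0)
    exact congrArg PrimeSpectrum.asIdeal this
  set p : Ideal S := RingHom.ker φ₁ with hp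
  haveI : p.IsPrime := hp1
  -- lift φᵢ to the localization at p
  have hu1 : ∀ y : p.primeCompl, IsUnit (φ₁ y) := fun y => by
    have : φ₁ y ≠ 0 := fun h => y.2 (by exact (RingHom.mem_ker.mpr h : (y : S) ∈ RingHom.ker φ₁))
    exact isUnit_iff_ne_zero.mpr this
  have hu2 : ∀ y : p.primeCompl, IsUnit (φ₂ y) := fun y => by
    have hy : (y : S) ∉ RingHom.ker φ₂ := hpeq ▸ y.2
    have : φ₂ y ≠ 0 := fun h => hy (by simpa [RingHom.mem_ker] using h)
    exact isUnit_iff_ne_zero.mpr this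
  set ℓ₁ : Localization.AtPrime p →+* K := IsLocalization.lift hu1 with hℓ₁
  set ℓ₂ : Localization.AtPrime p →+* K := IsLocalization.lift hu2 with hℓ₂
  -- the lifts kill the maximal ideal
  have hker : ∀ (φ : S →+* K) (hu : ∀ y : p.primeCompl, IsUnit (φ y))
      (hφ : ∀ x ∈ p, φ x = 0) (x : Localization.AtPrime p),
      x ∈ IsLocalRing.maximalIdeal (Localization.AtPrime p) →
      IsLocalization.lift (S := Localization.AtPrime p) hu x = 0 := by
    intro φ hu hφ x hx
    obtain ⟨⟨a, s⟩, rfl⟩ := IsLocalization.mk'_surjective p.primeCompl x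
    have ha : a ∈ p := (IsLocalization.AtPrime.mk'_mem_maximal_iff _ p a s).mp hx
    have := (IsLocalization.lift_mk'_spec (S := Localization.AtPrime p) (g := φ) hu a
      (IsLocalization.lift (S := Localization.AtPrime p) hu _) s).mp rfl
    have h0 : φ a = 0 := hφ a ha
    rw [h0] at this
    exact ((hu s).mul_right_eq_zero).mp this.symm
  -- descend to the residue field
  set ψ₁ : IsLocalRing.ResidueField (Localization.AtPrime p) →+* K :=
    Ideal.Quotient.lift _ ℓ₁
      (hker φ₁ hu1 (fun x hx => hx) ) with hψ₁
  set ψ₂ : IsLocalRing.ResidueField (Localization.AtPrime p) →+* K :=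
    Ideal.Quotient.lift _ ℓ₂
      (hker φ₂ hu2 (fun x hx => by simpa [RingHom.mem_ker] using (hpeq ▸ hx : x ∈ RingHom.ker φ₂))) with hψ₂
  set θ := @residueFieldMap _ _ _ _ f p ‹p.IsPrime› with hθ
  have hθsurj : Function.Surjective θ := (hres p ‹p.IsPrime›).2
  have happ1 : ∀ x, ψ₁ (IsLocalRing.residue _ x) = ℓ₁ x := fun x => rfl
  have happ2 : ∀ x, ψ₂ (IsLocalRing.residue _ x) = ℓ₂ x := fun x => rfl
  -- ψ₁ ∘ θ = ψ₂ ∘ θ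
  have hcompθ : ∀ z, ψ₁ (θ z) = ψ₂ (θ z) := by
    have h : (ψ₁.comp θ).comp (IsLocalRing.residue (Localization.AtPrime (p.comap f)))
        = (ψ₂.comp θ).comp (IsLocalRing.residue (Localization.AtPrime (p.comap f))) := by
      apply IsLocalization.ringHom_ext (p.comap f).primeCompl
      ext a
      have hloc : Localization.localRingHom (p.comap f) p f rfl
          (algebraMap A (Localization.AtPrime (p.comap f)) a)
          = algebraMap S (Localization.AtPrime p) (f a) :=
        Localization.localRingHom_to_map (p.comap f) p f rfl a
      haveI := Localization.isLocalHom_localRingHom (p.comap f) p f rfl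
      simp only [RingHom.coe_comp, Function.comp_apply, hθ, residueFieldMap]
      rw [IsLocalRing.ResidueField.map_residue, hloc]
      show ψ₁ (IsLocalRing.residue _ (algebraMap S (Localization.AtPrime p) (f a)))
        = ψ₂ (IsLocalRing.residue _ (algebraMap S (Localization.AtPrime p) (f a)))
      rw [happ1, happ2, hℓ₁, hℓ₂, IsLocalization.lift_eq, IsLocalization.lift_eq]
      exact RingHom.congr_fun hcomm a
    intro z
    obtain ⟨y, rfl⟩ := IsLocalRing.residue_surjective z
    exact RingHom.congr_fun h y
  have hψeq : ψ₁ = ψ₂ := by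
    refine RingHom.ext fun x => ?_
    obtain ⟨y, rfl⟩ := hθsurj x
    exact hcompθ y
  -- conclude
  ext t
  have e1 : φ₁ t = ψ₁ (IsLocalRing.residue _ (algebraMap S (Localization.AtPrime p) t)) := by
    rw [happ1, hℓ₁, IsLocalization.lift_eq]
  have e2 : φ₂ t = ψ₂ (IsLocalRing.residue _ (algebraMap S (Localization.AtPrime p) t)) := by
    rw [happ2, hℓ₂, IsLocalization.lift_eq]
  rw [e1, e2, hψeq]

set_option maxHeartbeats 1000000 in
set_option synthInstance.maxHeartbeats 1000000 in
/-- If `A → S` is Spec-injective and equiresidual, then `s ⊗ 1 - 1 ⊗ s` is nilpotent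
in `S ⊗[A] S` for every `s` (radiciality of the diagonal). -/
lemma nilpotent_diag {A S : Type*} [CommRing A] [CommRing S] [Algebra A S]
    (hspec : Function.Injective (PrimeSpectrum.comap (algebraMap A S)))
    (hres : Equiresidual (algebraMap A S)) (s : S) :
    IsNilpotent (s ⊗ₜ[A] (1 : S) - (1 : S) ⊗ₜ[A] s) := by
  rw [nilpotent_iff_mem_prime]
  intro q hq
  haveI := hq
  set ρ : (S ⊗[A] S) →+* FractionRing ((S ⊗[A] S) ⧸ q) :=
    (algebraMap ((S ⊗[A] S) ⧸ q) (FractionRing ((S ⊗[A] S) ⧸ q))).comp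
      (Ideal.Quotient.mk q) with hρ
  have hkerρ : ∀ x, ρ x = 0 ↔ x ∈ q := by
    intro x
    rw [hρ, RingHom.comp_apply]
    constructor
    · intro h
      have h0 : algebraMap ((S ⊗[A] S) ⧸ q) (FractionRing ((S ⊗[A] S) ⧸ q))
          (Ideal.Quotient.mk q x)
          = algebraMap ((S ⊗[A] S) ⧸ q) (FractionRing ((S ⊗[A] S) ⧸ q)) 0 := by
        rw [map_zero]; exact h
      have := IsFractionRing.injective ((S ⊗[A] S) ⧸ q) (FractionRing ((S ⊗[A] S) ⧸ q)) h0
      exact (Ideal.Quotient.eq_zero_iff_mem).mp this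
    · intro h
      rw [(Ideal.Quotient.eq_zero_iff_mem).mpr h, map_zero]
  set i₁ : S →ₐ[A] S ⊗[A] S := Algebra.TensorProduct.includeLeft
  set i₂ : S →ₐ[A] S ⊗[A] S := Algebra.TensorProduct.includeRight
  have hcomm : (ρ.comp i₁.toRingHom).comp (algebraMap A S)
      = (ρ.comp i₂.toRingHom).comp (algebraMap A S) := by
    ext a
    simp only [RingHom.coe_comp, Function.comp_apply, AlgHom.toRingHom_eq_coe,
      RingHom.coe_coe, AlgHom.commutes]
  have heq := radicial_key (algebraMap A S) hspec hres
    (ρ.comp i₁.toRingHom) (ρ.comp i₂.toRingHom) hcomm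
  have hval : ρ (i₁ s) = ρ (i₂ s) := RingHom.congr_fun heq s
  have h0 : ρ (s ⊗ₜ[A] (1 : S) - (1 : S) ⊗ₜ[A] s) = 0 := by
    have h1 : (s ⊗ₜ[A] (1 : S) : S ⊗[A] S) = i₁ s := rfl
    have h2 : ((1 : S) ⊗ₜ[A] s : S ⊗[A] S) = i₂ s := rfl
    rw [map_sub, h1, h2, hval, sub_self]
  exact (hkerρ _).mp h0

/-- The seminormalization `A⁺_B` of `A` in `B` is contained in the saturation `Â_B`. -/
theorem seminormalization_subset_saturation {A B : Type*} [CommRing A] [CommRing B]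
    [Algebra A B] (hinj : Function.Injective (algebraMap A B))
    (S : Subalgebra A B) (hS : IsSeminormalization S) :
    (S : Set B) ⊆ saturation A := by
  obtain ⟨⟨hint, hspec, hres⟩, -⟩ := hS
  intro b hb
  have key := nilpotent_diag hspec.1 hres (⟨b, hb⟩ : S)
  have h := key.map (Algebra.TensorProduct.map S.val S.val)
  simpa [saturation, Algebra.TensorProduct.map_tmul] using h
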